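/- For all nonnegative integers L and M and every nonzero complex number q that is not a root of unity, with a fixed square root q^{1/2}, Σ_{m≥0, m ≡ L (mod 2)} q^{m²/2} [3M choose m]_q [2M + (L-m)/2 choose 2M]_{q³} = Σ_{j ∈ ℤ} q^{(3j²+2j)/2} 𝒯(L, M; j, j; q³), where 𝒯(L, M; a, b; q) := Σ_{n≥0, n ≡ L-a (mod 2)} q^{n²/2} [M choose n]_q [M + b + (L-a-n)/2 choose M+b]_q [M - b + (L+a-n)/2 choose M-b]_q is Warnaar's refined q-trinomial coefficient. -/

import Mathlib

/-- The finite q-Pochhammer symbol `(a;q)_n`. -/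
noncomputable def qPoch (a q : ℂ) (n : ℕ) : ℂ :=
  ∏ j ∈ Finset.range n, (1 - a * q ^ j)

/-- The infinite q-Pochhammer symbol `(a;q)_∞`. -/
noncomputable def qPochInf (a q : ℂ) : ℂ :=
  ∏' j : ℕ, (1 - a * q ^ j)

/-- `1/(q;q)_n` for an integer `n`, with the convention that it is `0` for `n < 0`. -/
noncomputable def qPochInvZ (q : ℂ) (n : ℤ) : ℂ :=
  if 0 ≤ n then (qPoch q q n.toNat)⁻¹ else 0

/-- The q-trinomial coefficient `(L, b; a; q)_2`. -/
noncomputable def qTrinomial (L : ℕ) (b a : ℤ) (q : ℂ) : ℂ :=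
  ∑' n : ℕ, q ^ ((n : ℤ) * ((n : ℤ) + b)) * qPoch q q L * qPochInvZ q (n : ℤ) *
    qPochInvZ q ((n : ℤ) + a) * qPochInvZ q ((L : ℤ) - 2 * (n : ℤ) - a)

/-- The q-trinomial coefficient `T_n(L, a; q)`, where `s` is a fixed square root of `q`. -/
noncomputable def qTriT (n : ℤ) (L : ℕ) (a : ℤ) (q s : ℂ) : ℂ :=
  s ^ ((L : ℤ) * ((L : ℤ) - n) - a * (a - n)) * qTrinomial L (a - n) a q⁻¹

/-- The Gaussian (q-binomial) coefficient `[N choose k]_q`, zero unless `0 ≤ k ≤ N`. -/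
noncomputable def qBinom (N k : ℤ) (q : ℂ) : ℂ :=
  if 0 ≤ k ∧ k ≤ N then
    qPoch q q N.toNat * (qPoch q q k.toNat)⁻¹ * (qPoch q q (N - k).toNat)⁻¹
  else 0

/-- The quadratic form `Q(m,n) = 2m² + 6mn + 6n²` from Capparelli's theorems. -/
def Qcap (m n : ℕ) : ℕ := 2 * m ^ 2 + 6 * m * n + 6 * n ^ 2

/-- Warnaar's refined q-trinomial coefficient `T(L, M; a, b; q)`, where `s` is a fixed
square root of `q`. -/
noncomputable def qTriW (L M : ℕ) (a b : ℤ) (q s : ℂ) : ℂ :=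
  ∑' n : ℕ, if (2 : ℤ) ∣ ((L : ℤ) - a - n) then
      s ^ (n ^ 2) * qBinom (M : ℤ) (n : ℤ) q *
        qBinom ((M : ℤ) + b + ((L : ℤ) - a - n) / 2) ((M : ℤ) + b) q *
        qBinom ((M : ℤ) - b + ((L : ℤ) + a - n) / 2) ((M : ℤ) - b) q
    else 0


open PowerSeries

lemma qPoch_succ (a t : ℂ) (n : ℕ) : qPoch a t (n+1) = qPoch a t n * (1 - a * t ^ n) :=
  Finset.prod_range_succ _ _

lemma qPoch_zero (a t : ℂ) : qPoch a t 0 = 1 := rfl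

section Generic
variable {t : ℂ} (ht : t ≠ 0) (hp : ∀ n : ℕ, qPoch t t n ≠ 0)

lemma qBinom_eq_zero {N k : ℤ} (h : ¬(0 ≤ k ∧ k ≤ N)) : qBinom N k t = 0 := if_neg h

lemma qBinom_nat (n k : ℕ) (hk : k ≤ n) :
    qBinom n k t = qPoch t t n * (qPoch t t k)⁻¹ * (qPoch t t (n-k))⁻¹ := by
  rw [qBinom, if_pos (by constructor <;> omega)]
  have h1 : ((n : ℤ)).toNat = n := rfl
  have h2 : ((k : ℤ)).toNat = k := rfl
  have h3 : ((n : ℤ) - k).toNat = n - k := by omega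
  rw [h1, h2, h3]

include hp

lemma qBinom_zero_right (N : ℤ) (hN : 0 ≤ N) : qBinom N 0 t = 1 := by
  rw [qBinom, if_pos ⟨le_refl _, hN⟩]
  simp only [Int.toNat_zero, qPoch_zero, sub_zero, inv_one, mul_one]
  exact mul_inv_cancel₀ (hp _)

lemma qBinom_self (N : ℤ) (hN : 0 ≤ N) : qBinom N N t = 1 := by
  rw [qBinom, if_pos ⟨hN, le_refl _⟩]
  simp only [sub_self, Int.toNat_zero, qPoch_zero, inv_one, mul_one]
  exact mul_inv_cancel₀ (hp _)

omit hp in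
lemma qBinom_symm (n : ℕ) (k : ℤ) : qBinom n k t = qBinom n ((n : ℤ) - k) t := by
  by_cases h : 0 ≤ k ∧ k ≤ (n:ℤ)
  · obtain ⟨h0, h1⟩ := h
    lift k to ℕ using h0
    have hk : k ≤ n := by exact_mod_cast h1
    have h3 : (n:ℤ) - k = ((n - k : ℕ) : ℤ) := by omega
    rw [h3, qBinom_nat n k hk, qBinom_nat n (n-k) (by omega)]
    have : n - (n - k) = k := by omega
    rw [this]; ring
  · rw [qBinom_eq_zero h, qBinom_eq_zero (by omega)]

omit ht in
lemma qBinom_pascal (N : ℕ) (k : ℤ) :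
    qBinom ((N : ℤ) + 1) k t = qBinom N k t + t ^ ((N:ℤ)+1-k) * qBinom N (k-1) t := by
  rcases lt_or_ge k 0 with hk | hk
  · rw [qBinom_eq_zero (by omega), qBinom_eq_zero (by omega), qBinom_eq_zero (t := t) (by omega)]
    ring
  rcases eq_or_lt_of_le hk with hk0 | hk1
  · -- k = 0
    subst hk0
    rw [qBinom_zero_right hp _ (by omega), qBinom_zero_right hp _ (by omega),
      qBinom_eq_zero (t := t) (by omega)]
    ring
  rcases lt_or_ge (N:ℤ) k with hk2 | hk2
  · rcases eq_or_lt_of_le (show (N:ℤ)+1 ≤ k by omega) with hk3 | hk3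
    · -- k = N + 1
      have h1 : k = (N:ℤ) + 1 := by omega
      subst h1
      rw [qBinom_self hp _ (by omega), qBinom_eq_zero (t := t) (by omega)]
      have h2 : (N:ℤ) + 1 - ((N:ℤ)+1) = 0 := by ring
      have h3 : (N:ℤ) + 1 - 1 = (N:ℤ) := by ring
      rw [h2, h3, qBinom_self hp _ (by omega)]
      simp
    · rw [qBinom_eq_zero (by omega), qBinom_eq_zero (by omega),
        qBinom_eq_zero (t := t) (by omega)]
      ring
  · -- main case 1 ≤ k ≤ N
    lift k to ℕ using hk
    have hk1' : 1 ≤ k := by exact_mod_cast hk1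
    have hk2' : k ≤ N := by exact_mod_cast hk2
    obtain ⟨a, rfl⟩ : ∃ a, k = a + 1 := ⟨k - 1, by omega⟩
    obtain ⟨b, rfl⟩ : ∃ b, N = (a+1) + b := ⟨N - (a+1), by omega⟩
    have e1 : ((a+1+b : ℕ) : ℤ) + 1 = ((a+b+2 : ℕ) : ℤ) := by push_cast; ring
    have e2 : ((a+1+b : ℕ) : ℤ) + 1 - ((a+1:ℕ) : ℤ) = ((b+1 : ℕ) : ℤ) := by push_cast; ring
    have e3 : ((a+1:ℕ):ℤ) - 1 = ((a:ℕ):ℤ) := by push_cast; ring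
    rw [e2, e1, e3, zpow_natCast,
      qBinom_nat (a+b+2) (a+1) (by omega), qBinom_nat (a+1+b) (a+1) (by omega),
      qBinom_nat (a+1+b) a (by omega)]
    have r1 : a+b+2 - (a+1) = b+1 := by omega
    have r2 : a+1+b - (a+1) = b := by omega
    have r3 : a+1+b - a = b+1 := by omega
    rw [r1, r2, r3]
    have p1 : qPoch t t (a+b+2) = qPoch t t (a+1+b) * (1 - t * t ^ (a+1+b)) := by
      have : a+b+2 = (a+1+b)+1 := by omega
      rw [this, qPoch_succ]
    have p2 : qPoch t t (a+1) = qPoch t t a * (1 - t * t ^ a) := qPoch_succ t t a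
    have p3 : qPoch t t (b+1) = qPoch t t b * (1 - t * t ^ b) := qPoch_succ t t b
    rw [p1, p2, p3]
    have na : qPoch t t a ≠ 0 := hp a
    have nb : qPoch t t b ≠ 0 := hp b
    have nfa : (1 - t * t ^ a) ≠ 0 := by
      intro h; exact hp (a+1) (by rw [qPoch_succ, h, mul_zero])
    have nfb : (1 - t * t ^ b) ≠ 0 := by
      intro h; exact hp (b+1) (by rw [qPoch_succ, h, mul_zero])
    field_simp
    ring

lemma qBinom_pascal' (N : ℤ) (hN : 0 ≤ N) (k : ℤ) :
    qBinom (N+1) k t = qBinom N k t + t ^ (N+1-k) * qBinom N (k-1) t := by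
  lift N to ℕ using hN
  exact qBinom_pascal hp N k
end Generic

lemma coeff_X2_mul (f : PowerSeries ℂ) (k : ℕ) :
    (coeff (k+2)) (X^2 * f) = coeff k f := by
  simpa [add_comm] using PowerSeries.coeff_X_pow_mul f 2 k

lemma coeff_X2_mul_zero (f : PowerSeries ℂ) : (coeff 0) (X^2 * f) = 0 := by
  rw [pow_two, mul_assoc, coeff_zero_X_mul]

lemma coeff_X2_mul_one (f : PowerSeries ℂ) : (coeff 1) (X^2 * f) = 0 := by
  rw [pow_two, mul_assoc, coeff_succ_X_mul, coeff_zero_X_mul]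

lemma nat_sq (k : ℕ) : k + 2 * Nat.choose k 2 = k^2 := by
  induction k with
  | zero => rfl
  | succ n ih =>
    rw [Nat.choose_succ_succ n 1, Nat.choose_one_right]
    have hx : n.choose (Nat.succ 1) = n.choose 2 := rfl
    rw [hx]
    have : (n+1)^2 = n^2 + 2*n + 1 := by ring
    omega

section Generic
variable {t : ℂ} (hp : ∀ n : ℕ, qPoch t t n ≠ 0)
include hp

/-- q-binomial theorem for the product `∏ (1 + c t^j X)`. -/
lemma coeff_prodA (c : ℂ) (N k : ℕ) :
    (coeff k) (∏ j ∈ Finset.range N, (1 + C (c * t^j) * X)) =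
      c^k * t^(Nat.choose k 2) * qBinom N k t := by
  induction N generalizing k with
  | zero =>
    simp only [Finset.range_zero, Finset.prod_empty, coeff_one]
    rcases k with _|k
    · simp [qBinom_zero_right hp 0 le_rfl]
    · rw [if_neg (by omega), qBinom_eq_zero (by omega  : ¬((0:ℤ) ≤ (k+1:ℕ) ∧ ((k+1:ℕ):ℤ) ≤ (0:ℕ)))]
      ring
  | succ N ih =>
    rw [Finset.prod_range_succ]
    have expand : (∏ j ∈ Finset.range N, (1 + C (c * t^j) * X)) * (1 + C (c * t^N) * X)
        = (∏ j ∈ Finset.range N, (1 + C (c * t^j) * X))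
          + C (c * t^N) * (X * (∏ j ∈ Finset.range N, (1 + C (c * t^j) * X))) := by ring
    rw [expand, map_add, coeff_C_mul]
    rcases k with _|k
    · rw [coeff_zero_X_mul, mul_zero, add_zero, ih 0]
      simp only [Nat.cast_zero]
      rw [qBinom_zero_right hp _ (by omega), qBinom_zero_right hp _ (by omega)]
    · rw [coeff_succ_X_mul, ih (k+1), ih k]
      have hcast : ((N+1:ℕ) : ℤ) = (N:ℤ) + 1 := by push_cast; ring
      have hpas := qBinom_pascal hp N ((k:ℤ)+1)
      have e1 : ((k:ℤ)+1) - 1 = (k:ℤ) := by ring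
      rw [e1] at hpas
      have e2 : ((k+1:ℕ) : ℤ) = (k:ℤ)+1 := by push_cast; ring
      rw [hcast, e2, hpas, mul_add]
      congr 1
      symm
      · rcases le_or_gt k N with hkN | hkN
        · have e3 : ((N:ℤ)+1-((k:ℤ)+1)) = ((N - k : ℕ) : ℤ) := by omega
          rw [e3, zpow_natCast]
          have echoose : Nat.choose (k+1) 2 = Nat.choose k 2 + k := by
            rw [Nat.choose_succ_succ k 1, Nat.choose_one_right, Nat.add_comm]
          rw [echoose]
          have : t ^ (Nat.choose k 2 + k) * t ^ (N - k) = t ^ N * t ^ (Nat.choose k 2) := by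
            rw [← pow_add, ← pow_add]; congr 1; omega
          calc c^(k+1) * t ^ (Nat.choose k 2 + k) * (t ^ (N-k) * qBinom (↑N) (↑k) t)
                = (t ^ (Nat.choose k 2 + k) * t ^ (N - k)) * (c^(k+1) * qBinom (↑N) (↑k) t) := by ring
            _ = (t ^ N * t ^ (Nat.choose k 2)) * (c^(k+1) * qBinom (↑N) (↑k) t) := by rw [this]
            _ = c * t ^ N * (c ^ k * t ^ (Nat.choose k 2) * qBinom (↑N) (↑k) t) := by ring
        · rw [qBinom_eq_zero (by omega : ¬((0:ℤ) ≤ (k:ℤ) ∧ (k:ℤ) ≤ (N:ℤ)))]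
          ring

noncomputable def Fser (t : ℂ) (N : ℕ) : PowerSeries ℂ :=
  PowerSeries.mk fun k => if 2 ∣ k then qBinom ((N + k/2 : ℕ) : ℤ) ((k/2 : ℕ) : ℤ) t else 0

lemma Fser_step (N : ℕ) : Fser t (N+1) * (1 - C (t^(N+1)) * X^2) = Fser t N := by
  have expand : Fser t (N+1) * (1 - C (t^(N+1)) * X^2)
      = Fser t (N+1) - C (t^(N+1)) * (X^2 * Fser t (N+1)) := by ring
  rw [expand]
  ext k
  rw [map_sub, coeff_C_mul]
  rcases k with _|_|k
  · rw [coeff_X2_mul_zero, mul_zero, sub_zero]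
    simp only [Fser, coeff_mk]
    norm_num
    rw [qBinom_zero_right hp _ (by omega), qBinom_zero_right hp _ (by omega)]
  · rw [coeff_X2_mul_one, mul_zero, sub_zero]
    simp only [Fser, coeff_mk]
    norm_num
  · rw [coeff_X2_mul]
    simp only [Fser, coeff_mk]
    by_cases h2 : 2 ∣ k
    · obtain ⟨p, rfl⟩ := h2
      have d1 : 2 ∣ 2*p + 1 + 1 := by omega
      rw [if_pos d1, if_pos (by omega : 2 ∣ 2*p), if_pos d1]
      have e1 : (2*p+1+1)/2 = p + 1 := by omega
      have e2 : (2*p)/2 = p := by omega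
      rw [e1, e2]
      have hpas := qBinom_pascal hp (N+1+p) ((p:ℤ)+1)
      have c1 : ((N+1+(p+1) : ℕ) : ℤ) = ((N+1+p : ℕ) : ℤ) + 1 := by push_cast; ring
      have c2 : (((p+1) : ℕ) : ℤ) = (p:ℤ) + 1 := by push_cast; ring
      have c3 : ((p:ℤ)+1) - 1 = (p:ℤ) := by ring
      have c4 : ((N+1+p : ℕ) : ℤ) + 1 - ((p:ℤ)+1) = ((N+1 : ℕ) : ℤ) := by push_cast; ring
      rw [c3, c4, zpow_natCast] at hpas
      rw [c1, c2, hpas]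
      have c5 : ((N+(p+1) : ℕ) : ℤ) = ((N+1+p : ℕ) : ℤ) := by push_cast; ring
      rw [c5]
      ring
    · rw [if_neg (by omega), if_neg (by omega), if_neg (by omega)]
      ring

lemma Fser_prod (N : ℕ) :
    Fser t N * ∏ j ∈ Finset.range (N+1), (1 - C (t^j) * X^2) = 1 := by
  induction N with
  | zero =>
    rw [Finset.prod_range_one, pow_zero]
    have expand : Fser t 0 * (1 - C 1 * X^2)
        = Fser t 0 - C 1 * (X^2 * Fser t 0) := by ring
    rw [expand]
    ext k
    rw [map_sub, coeff_C_mul, one_mul, coeff_one]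
    rcases k with _|_|k
    · rw [coeff_X2_mul_zero, sub_zero, if_pos rfl]
      simp only [Fser, coeff_mk]
      norm_num
      exact qBinom_zero_right hp _ (by omega)
    · rw [coeff_X2_mul_one, sub_zero, if_neg (by omega)]
      simp only [Fser, coeff_mk]
      norm_num
    · rw [coeff_X2_mul, if_neg (by omega)]
      simp only [Fser, coeff_mk]
      by_cases h2 : 2 ∣ k
      · obtain ⟨p, rfl⟩ := h2
        rw [if_pos (by omega : 2 ∣ 2*p+1+1), if_pos (by omega : 2 ∣ 2*p)]
        have e1 : (2*p+1+1)/2 = p + 1 := by omega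
        have e2 : (2*p)/2 = p := by omega
        rw [e1, e2]
        simp only [Nat.zero_add]
        rw [qBinom_self hp _ (by omega), qBinom_self hp _ (by omega)]
        ring
      · rw [if_neg (by omega), if_neg (by omega)]
        ring
  | succ N ih =>
    rw [Finset.prod_range_succ, show ∀ a b c : PowerSeries ℂ, a * (b * c) = (a * c) * b by intros; ring,
      Fser_step hp, ih]

end Generic

/-- weight `c_j = s^(3j²+2j)` -/
noncomputable def wt (s : ℂ) (j : ℤ) : ℂ := s ^ (3*j^2 + 2*j)
/-- binomial in base `q³ = s⁶` -/
noncomputable def Bs (s : ℂ) (N k : ℤ) : ℂ := qBinom N k (s^6)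

noncomputable def hco (s : ℂ) (M k : ℕ) : ℂ :=
  ∑ x ∈ Finset.range (k+1),
    wt s ((k:ℤ) - 2*(x:ℤ)) * Bs s ((M:ℤ) + (k:ℤ) - (x:ℤ)) (x:ℤ) * Bs s ((M:ℤ) + (x:ℤ)) ((k:ℤ) - (x:ℤ))
noncomputable def uco (s : ℂ) (m k : ℕ) : ℂ :=
  ∑ x ∈ Finset.range (k+1),
    wt s ((k:ℤ) - 2*(x:ℤ)) * Bs s ((m:ℤ) + (k:ℤ) - (x:ℤ)) (x:ℤ) * Bs s ((m:ℤ) + 1 + (x:ℤ)) ((k:ℤ) - (x:ℤ))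
noncomputable def vco (s : ℂ) (m k : ℕ) : ℂ :=
  ∑ x ∈ Finset.range (k+1),
    wt s ((k:ℤ) - 2*(x:ℤ)) * Bs s ((m:ℤ) + 1 + (k:ℤ) - (x:ℤ)) (x:ℤ) * Bs s ((m:ℤ) + (x:ℤ)) ((k:ℤ) - (x:ℤ))
noncomputable def wco (s : ℂ) (m k : ℕ) : ℂ :=
  ∑ x ∈ Finset.range (k+1),
    wt s ((k:ℤ) - 2*(x:ℤ)) * Bs s ((m:ℤ) + (k:ℤ) - (x:ℤ)) (x:ℤ) * Bs s ((m:ℤ) + 2 + (x:ℤ)) ((k:ℤ) - (x:ℤ))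

section Rec
variable {s : ℂ} (hs0 : s ≠ 0) (hp : ∀ n : ℕ, qPoch (s^6) (s^6) n ≠ 0)

lemma hpow6 (e : ℤ) : ((s^6 : ℂ)) ^ e = s ^ (6*e) := by
  rw [← zpow_natCast s 6, ← zpow_mul]; norm_num


lemma Bs_eq_zero {N k : ℤ} (h : ¬(0 ≤ k ∧ k ≤ N)) : Bs s N k = 0 := qBinom_eq_zero h

include hp in
lemma Bs_pascal (N : ℤ) (hN : 0 ≤ N) (k : ℤ) :
    Bs s (N+1) k = Bs s N k + (s^6)^(N+1-k) * Bs s N (k-1) :=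
  qBinom_pascal' hp N hN k

include hs0

lemma wt_step_c (m : ℕ) (j : ℤ) : wt s (j+1) * (s^6)^((m:ℤ) - j) = s^(6*m+5) * wt s j := by
  rw [wt, wt, hpow6, ← zpow_natCast s (6*m+5), ← zpow_add₀ hs0, ← zpow_add₀ hs0]
  congr 1
  push_cast
  ring


lemma wt_step_a (m : ℕ) (j : ℤ) : wt s (j-1) * (s^6)^((m:ℤ) + j) = s^(6*m+1) * wt s j := by
  rw [wt, wt, hpow6, ← zpow_natCast s (6*m+1), ← zpow_add₀ hs0, ← zpow_add₀ hs0]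
  congr 1
  push_cast
  ring

include hp

lemma rec_c (m k : ℕ) : uco s m (k+1) = hco s m (k+1) + s^(6*m+5) * vco s m k := by
  rw [uco, hco, vco, Finset.mul_sum]
  have key : ∀ x ∈ Finset.range (k+1+1),
      wt s (((k+1:ℕ):ℤ) - 2*(x:ℤ)) * Bs s ((m:ℤ) + ((k+1:ℕ):ℤ) - (x:ℤ)) (x:ℤ) * Bs s ((m:ℤ) + 1 + (x:ℤ)) (((k+1:ℕ):ℤ) - (x:ℤ))
      = wt s (((k+1:ℕ):ℤ) - 2*(x:ℤ)) * Bs s ((m:ℤ) + ((k+1:ℕ):ℤ) - (x:ℤ)) (x:ℤ) * Bs s ((m:ℤ) + (x:ℤ)) (((k+1:ℕ):ℤ) - (x:ℤ))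
        + wt s (((k+1:ℕ):ℤ) - 2*(x:ℤ)) * Bs s ((m:ℤ) + ((k+1:ℕ):ℤ) - (x:ℤ)) (x:ℤ) *
            ((s^6)^((m:ℤ) + (x:ℤ) + 1 - (((k+1:ℕ):ℤ) - (x:ℤ))) * Bs s ((m:ℤ) + (x:ℤ)) ((((k+1:ℕ):ℤ) - (x:ℤ)) - 1)) := by
    intro x hx
    rw [show ((m:ℤ) + 1 + (x:ℤ)) = ((m:ℤ) + (x:ℤ)) + 1 by ring,
      Bs_pascal hp ((m:ℤ)+(x:ℤ)) (by positivity) (((k+1:ℕ):ℤ) - (x:ℤ)), mul_add]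
  rw [Finset.sum_congr rfl key, Finset.sum_add_distrib]
  congr 1
  rw [Finset.sum_range_succ]
  rw [show Bs s ((m:ℤ) + ((k+1:ℕ):ℤ)) ((((k+1:ℕ):ℤ) - ((k+1:ℕ):ℤ)) - 1) = 0 from
      Bs_eq_zero (by omega), mul_zero, mul_zero, add_zero]
  apply Finset.sum_congr rfl
  intro x hx
  rw [show (((k+1:ℕ)):ℤ) = (k:ℤ)+1 by push_cast; ring]
  rw [show ((k:ℤ)+1-2*(x:ℤ)) = ((k:ℤ)-2*(x:ℤ))+1 by ring,
    show ((m:ℤ) + (x:ℤ) + 1 - (((k:ℤ)+1) - (x:ℤ))) = (m:ℤ) - ((k:ℤ)-2*(x:ℤ)) by ring,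
    show (((k:ℤ)+1-(x:ℤ)) - 1 : ℤ) = (k:ℤ)-(x:ℤ) by ring,
    show ((m:ℤ)+((k:ℤ)+1)-(x:ℤ)) = (m:ℤ)+1+(k:ℤ)-(x:ℤ) by ring]
  linear_combination (Bs s ((m:ℤ)+1+(k:ℤ)-(x:ℤ)) (x:ℤ) * Bs s ((m:ℤ)+(x:ℤ)) ((k:ℤ)-(x:ℤ))) * wt_step_c hs0 m ((k:ℤ)-2*(x:ℤ))

lemma rec_d (m k : ℕ) : vco s m (k+1) = hco s m (k+1) + s^(6*m+1) * uco s m k := by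
  rw [vco, hco, uco, Finset.mul_sum]
  have key : ∀ x ∈ Finset.range (k+1+1),
      wt s (((k+1:ℕ):ℤ) - 2*(x:ℤ)) * Bs s ((m:ℤ) + 1 + ((k+1:ℕ):ℤ) - (x:ℤ)) (x:ℤ) * Bs s ((m:ℤ) + (x:ℤ)) (((k+1:ℕ):ℤ) - (x:ℤ))
      = wt s (((k+1:ℕ):ℤ) - 2*(x:ℤ)) * Bs s ((m:ℤ) + ((k+1:ℕ):ℤ) - (x:ℤ)) (x:ℤ) * Bs s ((m:ℤ) + (x:ℤ)) (((k+1:ℕ):ℤ) - (x:ℤ))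
        + wt s (((k+1:ℕ):ℤ) - 2*(x:ℤ)) * ((s^6)^((m:ℤ) + ((k+1:ℕ):ℤ) - (x:ℤ) + 1 - (x:ℤ)) * Bs s ((m:ℤ) + ((k+1:ℕ):ℤ) - (x:ℤ)) ((x:ℤ) - 1)) * Bs s ((m:ℤ) + (x:ℤ)) (((k+1:ℕ):ℤ) - (x:ℤ)) := by
    intro x hx
    have hx' : x ≤ k + 1 := Nat.lt_succ_iff.mp (Finset.mem_range.mp hx)
    rw [show ((m:ℤ) + 1 + ((k+1:ℕ):ℤ) - (x:ℤ)) = ((m:ℤ) + ((k+1:ℕ):ℤ) - (x:ℤ)) + 1 by ring,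
      Bs_pascal hp ((m:ℤ) + ((k+1:ℕ):ℤ) - (x:ℤ)) (by push_cast; omega) (x:ℤ), mul_add, add_mul]
  rw [Finset.sum_congr rfl key, Finset.sum_add_distrib]
  congr 1
  rw [Finset.sum_range_succ']
  rw [show Bs s ((m:ℤ) + ((k+1:ℕ):ℤ) - ((0:ℕ):ℤ)) (((0:ℕ):ℤ) - 1) = 0 from Bs_eq_zero (by omega)]
  simp only [mul_zero, zero_mul, add_zero]
  apply Finset.sum_congr rfl
  intro x hx
  rw [show (((k+1:ℕ)):ℤ) = (k:ℤ)+1 by push_cast; ring,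
    show (((x+1:ℕ)):ℤ) = (x:ℤ)+1 by push_cast; ring]
  rw [show ((k:ℤ)+1-2*((x:ℤ)+1)) = ((k:ℤ)-2*(x:ℤ))-1 by ring,
    show ((m:ℤ) + ((k:ℤ)+1) - ((x:ℤ)+1) + 1 - ((x:ℤ)+1)) = (m:ℤ) + ((k:ℤ)-2*(x:ℤ)) by ring,
    show ((x:ℤ)+1-1) = (x:ℤ) by ring,
    show ((m:ℤ)+((k:ℤ)+1)-((x:ℤ)+1)) = (m:ℤ)+(k:ℤ)-(x:ℤ) by ring,
    show ((k:ℤ)+1-((x:ℤ)+1)) = (k:ℤ)-(x:ℤ) by ring,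
    show ((m:ℤ)+((x:ℤ)+1)) = (m:ℤ)+1+(x:ℤ) by ring]
  linear_combination (Bs s ((m:ℤ)+(k:ℤ)-(x:ℤ)) (x:ℤ) * Bs s ((m:ℤ)+1+(x:ℤ)) ((k:ℤ)-(x:ℤ))) * wt_step_a hs0 m ((k:ℤ)-2*(x:ℤ))

lemma rec_a (m k : ℕ) : hco s (m+1) (k+1) = uco s m (k+1) + s^(6*m+1) * wco s m k := by
  rw [hco, uco, wco, Finset.mul_sum]
  have key : ∀ x ∈ Finset.range (k+1+1),
      wt s (((k+1:ℕ):ℤ) - 2*(x:ℤ)) * Bs s (((m+1:ℕ):ℤ) + ((k+1:ℕ):ℤ) - (x:ℤ)) (x:ℤ) * Bs s (((m+1:ℕ):ℤ) + (x:ℤ)) (((k+1:ℕ):ℤ) - (x:ℤ))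
      = wt s (((k+1:ℕ):ℤ) - 2*(x:ℤ)) * Bs s ((m:ℤ) + ((k+1:ℕ):ℤ) - (x:ℤ)) (x:ℤ) * Bs s ((m:ℤ) + 1 + (x:ℤ)) (((k+1:ℕ):ℤ) - (x:ℤ))
        + wt s (((k+1:ℕ):ℤ) - 2*(x:ℤ)) * ((s^6)^((m:ℤ) + ((k+1:ℕ):ℤ) - (x:ℤ) + 1 - (x:ℤ)) * Bs s ((m:ℤ) + ((k+1:ℕ):ℤ) - (x:ℤ)) ((x:ℤ) - 1)) * Bs s ((m:ℤ) + 1 + (x:ℤ)) (((k+1:ℕ):ℤ) - (x:ℤ)) := by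
    intro x hx
    have hx' : x ≤ k + 1 := Nat.lt_succ_iff.mp (Finset.mem_range.mp hx)
    rw [show (((m+1:ℕ)):ℤ) + ((k+1:ℕ):ℤ) - (x:ℤ) = ((m:ℤ) + ((k+1:ℕ):ℤ) - (x:ℤ)) + 1 by push_cast; ring,
      show (((m+1:ℕ)):ℤ) + (x:ℤ) = (m:ℤ) + 1 + (x:ℤ) by push_cast; ring,
      Bs_pascal hp ((m:ℤ) + ((k+1:ℕ):ℤ) - (x:ℤ)) (by push_cast; omega) (x:ℤ), mul_add, add_mul]
  rw [Finset.sum_congr rfl key, Finset.sum_add_distrib]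
  congr 1
  rw [Finset.sum_range_succ']
  rw [show Bs s ((m:ℤ) + ((k+1:ℕ):ℤ) - ((0:ℕ):ℤ)) (((0:ℕ):ℤ) - 1) = 0 from Bs_eq_zero (by omega)]
  simp only [mul_zero, zero_mul, add_zero]
  apply Finset.sum_congr rfl
  intro x hx
  rw [show (((k+1:ℕ)):ℤ) = (k:ℤ)+1 by push_cast; ring,
    show (((x+1:ℕ)):ℤ) = (x:ℤ)+1 by push_cast; ring]
  rw [show ((k:ℤ)+1-2*((x:ℤ)+1)) = ((k:ℤ)-2*(x:ℤ))-1 by ring,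
    show ((m:ℤ) + ((k:ℤ)+1) - ((x:ℤ)+1) + 1 - ((x:ℤ)+1)) = (m:ℤ) + ((k:ℤ)-2*(x:ℤ)) by ring,
    show ((x:ℤ)+1-1) = (x:ℤ) by ring,
    show ((m:ℤ)+((k:ℤ)+1)-((x:ℤ)+1)) = (m:ℤ)+(k:ℤ)-(x:ℤ) by ring,
    show ((k:ℤ)+1-((x:ℤ)+1)) = (k:ℤ)-(x:ℤ) by ring,
    show ((m:ℤ)+1+((x:ℤ)+1)) = (m:ℤ)+2+(x:ℤ) by ring]
  linear_combination (Bs s ((m:ℤ)+(k:ℤ)-(x:ℤ)) (x:ℤ) * Bs s ((m:ℤ)+2+(x:ℤ)) ((k:ℤ)-(x:ℤ))) * wt_step_a hs0 m ((k:ℤ)-2*(x:ℤ))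

lemma rec_b (m k : ℕ) : wco s m (k+1) = uco s m (k+1) + s^(6*(m+1)+5) * hco s (m+1) k := by
  rw [wco, uco, hco, Finset.mul_sum]
  have key : ∀ x ∈ Finset.range (k+1+1),
      wt s (((k+1:ℕ):ℤ) - 2*(x:ℤ)) * Bs s ((m:ℤ) + ((k+1:ℕ):ℤ) - (x:ℤ)) (x:ℤ) * Bs s ((m:ℤ) + 2 + (x:ℤ)) (((k+1:ℕ):ℤ) - (x:ℤ))
      = wt s (((k+1:ℕ):ℤ) - 2*(x:ℤ)) * Bs s ((m:ℤ) + ((k+1:ℕ):ℤ) - (x:ℤ)) (x:ℤ) * Bs s ((m:ℤ) + 1 + (x:ℤ)) (((k+1:ℕ):ℤ) - (x:ℤ))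
        + wt s (((k+1:ℕ):ℤ) - 2*(x:ℤ)) * Bs s ((m:ℤ) + ((k+1:ℕ):ℤ) - (x:ℤ)) (x:ℤ) *
            ((s^6)^((m:ℤ) + 1 + (x:ℤ) + 1 - (((k+1:ℕ):ℤ) - (x:ℤ))) * Bs s ((m:ℤ) + 1 + (x:ℤ)) ((((k+1:ℕ):ℤ) - (x:ℤ)) - 1)) := by
    intro x hx
    rw [show ((m:ℤ) + 2 + (x:ℤ)) = ((m:ℤ) + 1 + (x:ℤ)) + 1 by ring,
      Bs_pascal hp ((m:ℤ) + 1 + (x:ℤ)) (by positivity) (((k+1:ℕ):ℤ) - (x:ℤ)), mul_add]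
  rw [Finset.sum_congr rfl key, Finset.sum_add_distrib]
  congr 1
  rw [Finset.sum_range_succ]
  rw [show Bs s ((m:ℤ) + 1 + ((k+1:ℕ):ℤ)) ((((k+1:ℕ):ℤ) - ((k+1:ℕ):ℤ)) - 1) = 0 from
      Bs_eq_zero (by omega), mul_zero, mul_zero, add_zero]
  apply Finset.sum_congr rfl
  intro x hx
  rw [show (((k+1:ℕ)):ℤ) = (k:ℤ)+1 by push_cast; ring,
    show (((m+1:ℕ)):ℤ) = (m:ℤ)+1 by push_cast; ring]
  rw [show ((k:ℤ)+1-2*(x:ℤ)) = ((k:ℤ)-2*(x:ℤ))+1 by ring,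
    show ((m:ℤ) + 1 + (x:ℤ) + 1 - (((k:ℤ)+1) - (x:ℤ))) = ((m:ℤ)+1) - ((k:ℤ)-2*(x:ℤ)) by ring,
    show (((k:ℤ)+1-(x:ℤ)) - 1 : ℤ) = (k:ℤ)-(x:ℤ) by ring,
    show ((m:ℤ)+((k:ℤ)+1)-(x:ℤ)) = (m:ℤ)+1+(k:ℤ)-(x:ℤ) by ring]
  have hw := wt_step_c hs0 (m+1) ((k:ℤ)-2*(x:ℤ))
  rw [show (((m+1:ℕ)):ℤ) = (m:ℤ)+1 by push_cast; ring] at hw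
  linear_combination (Bs s ((m:ℤ)+1+(k:ℤ)-(x:ℤ)) (x:ℤ) * Bs s ((m:ℤ)+1+(x:ℤ)) ((k:ℤ)-(x:ℤ))) * hw

omit hs0 in
lemma hco_zero (M : ℕ) : hco s M 0 = 1 := by
  rw [hco, Finset.sum_range_one]
  simp only [Nat.cast_zero, wt]
  norm_num
  rw [show Bs s ((M:ℤ)) 0 = 1 from qBinom_zero_right hp _ (by omega)]
  norm_num

omit hs0 in
lemma uco_zero (m : ℕ) : uco s m 0 = 1 := by
  rw [uco, Finset.sum_range_one]
  simp only [Nat.cast_zero, wt]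
  norm_num
  rw [show Bs s ((m:ℤ)) 0 = 1 from qBinom_zero_right hp _ (by omega),
    show Bs s ((m:ℤ)+1) 0 = 1 from qBinom_zero_right hp _ (by omega)]
  norm_num

omit hs0 in
lemma vco_zero (m : ℕ) : vco s m 0 = 1 := by
  rw [vco, Finset.sum_range_one]
  simp only [Nat.cast_zero, wt]
  norm_num
  rw [show Bs s ((m:ℤ)+1) 0 = 1 from qBinom_zero_right hp _ (by omega),
    show Bs s ((m:ℤ)) 0 = 1 from qBinom_zero_right hp _ (by omega)]
  norm_num

omit hs0 in
lemma wco_zero (m : ℕ) : wco s m 0 = 1 := by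
  rw [wco, Finset.sum_range_one]
  simp only [Nat.cast_zero, wt]
  norm_num
  rw [show Bs s ((m:ℤ)) 0 = 1 from qBinom_zero_right hp _ (by omega),
    show Bs s ((m:ℤ)+2) 0 = 1 from qBinom_zero_right hp _ (by omega)]
  norm_num
end Rec
section Ser
variable {s : ℂ} (hs0 : s ≠ 0) (hp : ∀ n : ℕ, qPoch (s^6) (s^6) n ≠ 0)

noncomputable def Hs (s : ℂ) (M : ℕ) : PowerSeries ℂ := PowerSeries.mk (hco s M)
noncomputable def Us (s : ℂ) (m : ℕ) : PowerSeries ℂ := PowerSeries.mk (uco s m)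
noncomputable def Vs (s : ℂ) (m : ℕ) : PowerSeries ℂ := PowerSeries.mk (vco s m)
noncomputable def Ws (s : ℂ) (m : ℕ) : PowerSeries ℂ := PowerSeries.mk (wco s m)

omit hs0 hp in
lemma coeff_CX_mul (a : ℂ) (f : PowerSeries ℂ) (k : ℕ) :
    (coeff k) (C a * (X * f)) = if h : k = 0 then 0 else a * (coeff (k-1)) f := by
  rcases k with _|k
  · simp
  · rw [coeff_C_mul, coeff_succ_X_mul, dif_neg (Nat.succ_ne_zero k)]
    rfl

include hs0 hp

lemma ser_a (m : ℕ) : Hs s (m+1) = Us s m + C (s^(6*m+1)) * (X * Ws s m) := by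
  ext k
  rw [map_add, coeff_CX_mul]
  rcases k with _|k
  · simp only [Hs, Us, coeff_mk, dif_pos, add_zero, hco_zero hp, uco_zero hp]
  · rw [dif_neg (Nat.succ_ne_zero k)]
    simp only [Hs, Us, Ws, coeff_mk, Nat.add_sub_cancel]
    exact rec_a hs0 hp m k

lemma ser_b (m : ℕ) : Ws s m = Us s m + C (s^(6*(m+1)+5)) * (X * Hs s (m+1)) := by
  ext k
  rw [map_add, coeff_CX_mul]
  rcases k with _|k
  · simp only [Ws, Us, coeff_mk, dif_pos, add_zero, wco_zero hp, uco_zero hp]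
  · rw [dif_neg (Nat.succ_ne_zero k)]
    simp only [Ws, Us, Hs, coeff_mk, Nat.add_sub_cancel]
    exact rec_b hs0 hp m k

lemma ser_c (m : ℕ) : Us s m = Hs s m + C (s^(6*m+5)) * (X * Vs s m) := by
  ext k
  rw [map_add, coeff_CX_mul]
  rcases k with _|k
  · simp only [Us, Hs, coeff_mk, dif_pos, add_zero, hco_zero hp, uco_zero hp]
  · rw [dif_neg (Nat.succ_ne_zero k)]
    simp only [Us, Hs, Vs, coeff_mk, Nat.add_sub_cancel]
    exact rec_c hs0 hp m k

lemma ser_d (m : ℕ) : Vs s m = Hs s m + C (s^(6*m+1)) * (X * Us s m) := by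
  ext k
  rw [map_add, coeff_CX_mul]
  rcases k with _|k
  · simp only [Vs, Hs, coeff_mk, dif_pos, add_zero, hco_zero hp, vco_zero hp]
  · rw [dif_neg (Nat.succ_ne_zero k)]
    simp only [Vs, Hs, Us, coeff_mk, Nat.add_sub_cancel]
    exact rec_d hs0 hp m k

lemma starR (m : ℕ) :
    Hs s (m+1) * ((1 - C (s^(12*m+6)) * X^2) * (1 - C (s^(12*m+12)) * X^2))
      = Hs s m * ((1 + C (s^(6*m+1)) * X) * (1 + C (s^(6*m+5)) * X)) := by
  have hA := ser_a hs0 hp m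
  have hB := ser_b hs0 hp m
  have hC := ser_c hs0 hp m
  have hD := ser_d hs0 hp m
  have e1 : (C (s^(6*m+5)) * X) * (C (s^(6*m+1)) * X) = C (s^(12*m+6)) * X^2 := by
    rw [show s^(12*m+6) = s^(6*m+5) * s^(6*m+1) by rw [← pow_add]; congr 1; ring, map_mul]
    ring
  have e2 : (C (s^(6*m+1)) * X) * (C (s^(6*(m+1)+5)) * X) = C (s^(12*m+12)) * X^2 := by
    rw [show s^(12*m+12) = s^(6*m+1) * s^(6*(m+1)+5) by rw [← pow_add]; congr 1; ring, map_mul]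
    ring
  rw [← e1, ← e2]
  linear_combination
    ((1 : PowerSeries ℂ) - (C (s^(6*m+5)) * X) * (C (s^(6*m+1)) * X)) * hA
    + ((1 : PowerSeries ℂ) - (C (s^(6*m+5)) * X) * (C (s^(6*m+1)) * X)) * (C (s^(6*m+1)) * X) * hB
    + ((1 : PowerSeries ℂ) + C (s^(6*m+1)) * X) * hC
    + ((1 : PowerSeries ℂ) + C (s^(6*m+1)) * X) * (C (s^(6*m+5)) * X) * hD

omit hs0 hp in
lemma wt_zero : wt s 0 = 1 := by rw [wt]; norm_num

omit hs0 in
lemma hco_zero_M (k : ℕ) : hco s 0 k = if 2 ∣ k then 1 else 0 := by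
  rw [hco]
  by_cases h2 : 2 ∣ k
  · obtain ⟨p, rfl⟩ := h2
    rw [if_pos ⟨p, rfl⟩]
    rw [Finset.sum_eq_single_of_mem p (Finset.mem_range.mpr (by omega))]
    · rw [show ((2*p:ℕ):ℤ) - 2*(p:ℤ) = 0 by push_cast; ring, wt_zero,
        show ((0:ℕ):ℤ) + ((2*p:ℕ):ℤ) - (p:ℤ) = (p:ℤ) by push_cast; ring,
        show ((0:ℕ):ℤ) + (p:ℤ) = (p:ℤ) by push_cast; ring,
        show ((2*p:ℕ):ℤ) - (p:ℤ) = (p:ℤ) by push_cast; ring,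
        show Bs s (p:ℤ) (p:ℤ) = 1 from qBinom_self hp _ (by omega)]
      norm_num
    · intro x hx hne
      rcases Nat.lt_or_ge x p with hlt | hge
      · rw [show Bs s (((0:ℕ):ℤ) + (x:ℤ)) (((2*p:ℕ):ℤ) - (x:ℤ)) = 0 from
          qBinom_eq_zero (by push_cast; omega), mul_zero]
      · have hgt : p < x := lt_of_le_of_ne hge (Ne.symm hne)
        rw [show Bs s (((0:ℕ):ℤ) + ((2*p:ℕ):ℤ) - (x:ℤ)) (x:ℤ) = 0 from
          qBinom_eq_zero (by push_cast; omega), mul_zero, zero_mul]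
  · rw [if_neg h2]
    apply Finset.sum_eq_zero
    intro x hx
    rcases Nat.lt_or_ge (2*x) k with hlt | hge
    · rw [show Bs s (((0:ℕ):ℤ) + (x:ℤ)) ((k:ℤ) - (x:ℤ)) = 0 from
        qBinom_eq_zero (by push_cast; omega), mul_zero]
    · have hgt : k < 2*x := by omega
      rw [show Bs s (((0:ℕ):ℤ) + (k:ℤ) - (x:ℤ)) (x:ℤ) = 0 from
        qBinom_eq_zero (by push_cast; omega), mul_zero, zero_mul]

omit hs0 in
lemma Hzero : Hs s 0 * (1 - C 1 * X^2) = 1 := by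
  have expand : Hs s 0 * (1 - C 1 * X^2) = Hs s 0 - C 1 * (X^2 * Hs s 0) := by ring
  rw [expand]
  ext k
  rw [map_sub, coeff_C_mul, one_mul, coeff_one]
  rcases k with _|_|k
  · rw [coeff_X2_mul_zero, sub_zero, if_pos rfl]
    simp only [Hs, coeff_mk, hco_zero_M hp]
    norm_num
  · rw [coeff_X2_mul_one, sub_zero, if_neg (by omega)]
    simp only [Hs, coeff_mk, hco_zero_M hp]
    norm_num
  · rw [coeff_X2_mul, if_neg (by omega)]
    simp only [Hs, coeff_mk, hco_zero_M hp]
    by_cases h2 : 2 ∣ k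
    · rw [if_pos h2, if_pos (by omega : 2 ∣ k+1+1)]; ring
    · rw [if_neg h2, if_neg (by omega : ¬ 2 ∣ k+1+1)]; ring

lemma starProd (M : ℕ) :
    Hs s M * (∏ j ∈ Finset.range (2*M+1), (1 - C ((s^6)^j) * X^2))
      = ∏ i ∈ Finset.range M, ((1 + C (s^(6*i+1)) * X) * (1 + C (s^(6*i+5)) * X)) := by
  induction M with
  | zero =>
    rw [Finset.prod_range_one, Finset.prod_range_zero, pow_zero]
    exact Hzero hp
  | succ m ih =>
    rw [Finset.prod_range_succ (fun i => ((1:PowerSeries ℂ) + C (s^(6*i+1)) * X) * (1 + C (s^(6*i+5)) * X)) m]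
    rw [show 2*(m+1)+1 = (2*m+1) + 1 + 1 by ring, Finset.prod_range_succ, Finset.prod_range_succ]
    rw [show ((s^6 : ℂ))^(2*m+1) = s^(12*m+6) by rw [← pow_mul]; congr 1; ring,
        show ((s^6 : ℂ))^(2*m+1+1) = s^(12*m+12) by rw [← pow_mul]; congr 1; ring]
    rw [← ih]
    linear_combination (∏ j ∈ Finset.range (2*m+1), ((1:PowerSeries ℂ) - C ((s^6)^j) * X^2)) * starR hs0 hp m

end Ser
section JS
variable {s : ℂ}

lemma jsum (M kk : ℕ) :
    (∑ j ∈ Finset.Icc (-(M:ℤ)) (M:ℤ),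
      if (2:ℤ) ∣ ((kk:ℤ) - j) then
        wt s j * qBinom ((M:ℤ)+j+((kk:ℤ)-j)/2) ((M:ℤ)+j) (s^6)
          * qBinom ((M:ℤ)-j+((kk:ℤ)+j)/2) ((M:ℤ)-j) (s^6)
      else 0) = hco s M kk := by
  have hIccsub : Finset.Icc (-(M:ℤ)) (M:ℤ) ⊆ Finset.Icc (-(M:ℤ)-kk) ((M:ℤ)+kk) := by
    intro j hj
    simp only [Finset.mem_Icc] at *
    omega
  rw [Finset.sum_subset hIccsub (fun j hj hnj => by
    simp only [Finset.mem_Icc, not_and_or, not_le] at hnj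
    by_cases hg : (2:ℤ) ∣ ((kk:ℤ) - j)
    · rw [if_pos hg]
      rcases hnj with hlt | hgt
      · rw [show qBinom ((M:ℤ)+j+((kk:ℤ)-j)/2) ((M:ℤ)+j) (s^6) = 0 from
          qBinom_eq_zero (by omega), mul_zero, zero_mul]
      · rw [show qBinom ((M:ℤ)-j+((kk:ℤ)+j)/2) ((M:ℤ)-j) (s^6) = 0 from
          qBinom_eq_zero (by omega), mul_zero]
    · exact if_neg hg)]
  rw [show hco s M kk = ∑ j ∈ (Finset.range (kk+1)).image (fun x : ℕ => (kk:ℤ) - 2*(x:ℤ)),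
      (if (2:ℤ) ∣ ((kk:ℤ) - j) then
        wt s j * qBinom ((M:ℤ)+j+((kk:ℤ)-j)/2) ((M:ℤ)+j) (s^6)
          * qBinom ((M:ℤ)-j+((kk:ℤ)+j)/2) ((M:ℤ)-j) (s^6)
      else 0) from ?_]
  · -- sum over image = sum over big Icc
    symm
    apply Finset.sum_subset
    · intro j hj
      simp only [Finset.mem_image, Finset.mem_range] at hj
      obtain ⟨x, hx, rfl⟩ := hj
      simp only [Finset.mem_Icc]
      omega
    · intro j hj hnj
      simp only [Finset.mem_image, Finset.mem_range] at hnj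
      push_neg at hnj
      by_cases hg : (2:ℤ) ∣ ((kk:ℤ) - j)
      · rw [if_pos hg]
        obtain ⟨d, hd⟩ := hg
        rcases lt_or_ge d 0 with hd0 | hd0
        · rw [show ((kk:ℤ)-j)/2 = d by omega,
            show qBinom ((M:ℤ)+j+d) ((M:ℤ)+j) (s^6) = 0 from qBinom_eq_zero (by omega),
            mul_zero, zero_mul]
        · rcases lt_or_ge (kk:ℤ) d with hd1 | hd1
          · rw [show ((kk:ℤ)+j)/2 = (kk:ℤ) - d by omega,
              show qBinom ((M:ℤ)-j+((kk:ℤ)-d)) ((M:ℤ)-j) (s^6) = 0 from qBinom_eq_zero (by omega),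
              mul_zero]
          · exfalso
            have h1 : d.toNat < kk + 1 := by omega
            have h2 : (kk:ℤ) - 2*((d.toNat:ℕ):ℤ) = j := by omega
            exact hnj d.toNat h1 h2
      · exact if_neg hg
  · -- image sum equals hco
    rw [Finset.sum_image (by intro x hx y hy hxy; have h' : (kk:ℤ) - 2*(x:ℤ) = (kk:ℤ) - 2*(y:ℤ) := hxy; omega)]
    rw [hco]
    apply Finset.sum_congr rfl
    intro x hx
    have hx' : x ≤ kk := by simpa [Nat.lt_succ_iff] using hx
    rw [if_pos (show (2:ℤ) ∣ ((kk:ℤ) - ((kk:ℤ) - 2*(x:ℤ))) by omega)]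
    rw [show ((kk:ℤ) - ((kk:ℤ) - 2*(x:ℤ)))/2 = (x:ℤ) by omega,
      show ((kk:ℤ) + ((kk:ℤ) - 2*(x:ℤ)))/2 = (kk:ℤ) - (x:ℤ) by omega,
      show (M:ℤ) + ((kk:ℤ) - 2*(x:ℤ)) + (x:ℤ) = ((M + (kk - x) : ℕ) : ℤ) by omega,
      show (M:ℤ) - ((kk:ℤ) - 2*(x:ℤ)) + ((kk:ℤ) - (x:ℤ)) = ((M + x : ℕ) : ℤ) by omega,
      qBinom_symm (M + (kk - x)) ((M:ℤ) + ((kk:ℤ) - 2*(x:ℤ))),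
      qBinom_symm (M + x) ((M:ℤ) - ((kk:ℤ) - 2*(x:ℤ)))]
    rw [show ((M + (kk - x) : ℕ) : ℤ) - ((M:ℤ) + ((kk:ℤ) - 2*(x:ℤ))) = (x:ℤ) by omega,
      show ((M + x : ℕ) : ℤ) - ((M:ℤ) - ((kk:ℤ) - 2*(x:ℤ))) = (kk:ℤ) - (x:ℤ) by omega,
      show ((M + (kk - x) : ℕ) : ℤ) = (M:ℤ) + (kk:ℤ) - (x:ℤ) by omega,
      show ((M + x : ℕ) : ℤ) = (M:ℤ) + (x:ℤ) by omega]
    rfl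
end JS

section Asm
variable {s : ℂ}

lemma qPoch_ne (t : ℂ) (hroot' : ∀ k : ℕ, 0 < k → t^k ≠ 1) : ∀ n : ℕ, qPoch t t n ≠ 0 := by
  intro n
  rw [qPoch]
  apply Finset.prod_ne_zero_iff.mpr
  intro j _ h0
  have h1 : t^(j+1) = 1 := by
    rw [pow_succ']
    exact (sub_eq_zero.mp h0).symm
  exact hroot' (j+1) (by omega) h1

lemma regroup (M : ℕ) :
    (∏ j ∈ Finset.range (3*M), (1 + C (s * (s^2)^j) * X))
      = (∏ j ∈ Finset.range M, (1 + C (s^3 * (s^6)^j) * X))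
        * ∏ i ∈ Finset.range M, ((1 + C (s^(6*i+1)) * X) * (1 + C (s^(6*i+5)) * X)) := by
  induction M with
  | zero => simp
  | succ m ih =>
    rw [Finset.prod_range_succ (fun j => (1 + C (s^3 * (s^6:ℂ)^j) * X)) m,
      Finset.prod_range_succ (fun i => ((1:PowerSeries ℂ) + C (s^(6*i+1)) * X) * (1 + C (s^(6*i+5)) * X)) m,
      show 3*(m+1) = 3*m+1+1+1 by ring, Finset.prod_range_succ, Finset.prod_range_succ,
      Finset.prod_range_succ, ih]
    rw [show s * ((s:ℂ)^2)^(3*m) = s^(6*m+1) by rw [← pow_mul, ← pow_succ']; congr 1; ring,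
      show s * ((s:ℂ)^2)^(3*m+1) = s^3 * (s^6)^m by rw [← pow_mul, ← pow_succ', ← pow_mul, ← pow_add]; congr 1; ring,
      show s * ((s:ℂ)^2)^(3*m+1+1) = s^(6*m+5) by rw [← pow_mul, ← pow_succ']; congr 1; ring]
    ring

lemma LHS_eq (hp2 : ∀ n : ℕ, qPoch (s^2) (s^2) n ≠ 0) (L M : ℕ) :
    (∑' m : ℕ, if m % 2 = L % 2 then
        s ^ (m ^ 2) * qBinom (3 * (M:ℤ)) (m:ℤ) (s^2) *
          qBinom (2 * (M:ℤ) + ((L:ℤ) - (m:ℤ)) / 2) (2 * (M:ℤ)) ((s^2) ^ 3)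
      else 0)
    = coeff L ((∏ j ∈ Finset.range (3*M), (1 + C (s * (s^2)^j) * X)) * Fser (s^6) (2*M)) := by
  rw [tsum_eq_sum (s := Finset.range (L+1)) (fun m hm => by
    have hm' : L + 1 ≤ m := by simpa [Nat.lt_succ_iff, Nat.succ_le_iff] using Finset.mem_range.not.mp hm
    by_cases hpar : m % 2 = L % 2
    · rw [if_pos hpar, show qBinom (2*(M:ℤ) + ((L:ℤ)-(m:ℤ))/2) (2*(M:ℤ)) ((s^2)^3) = 0 from
        qBinom_eq_zero (by omega), mul_zero]
    · exact if_neg hpar)]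
  rw [coeff_mul, Finset.Nat.sum_antidiagonal_eq_sum_range_succ_mk]
  apply Finset.sum_congr rfl
  intro m hm
  have hm' : m ≤ L := by simpa [Nat.lt_succ_iff] using hm
  rw [coeff_prodA hp2 s (3*M) m]
  simp only [Fser, coeff_mk]
  by_cases hpar : m % 2 = L % 2
  · have h2 : 2 ∣ (L - m) := by omega
    rw [if_pos hpar, if_pos h2]
    rw [show ((s:ℂ)^2)^3 = s^6 by ring]
    rw [show (s:ℂ)^(m^2) = s^m * (s^2)^(m.choose 2) by
      rw [← pow_mul, ← pow_add]; congr 1; exact (nat_sq m).symm]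
    rw [show (3 * (M:ℤ)) = ((3*M : ℕ):ℤ) by push_cast; ring]
    rw [show qBinom (2*(M:ℤ) + ((L:ℤ)-(m:ℤ))/2) (2*(M:ℤ)) ((s:ℂ)^6)
        = qBinom ((2*M + (L-m)/2 : ℕ):ℤ) (((2*M + (L-m)/2 : ℕ):ℤ) - 2*(M:ℤ)) ((s:ℂ)^6) from by
      rw [show (2*(M:ℤ) + ((L:ℤ)-(m:ℤ))/2) = ((2*M + (L-m)/2 : ℕ):ℤ) by omega]
      exact qBinom_symm _ _]
    rw [show ((2*M + (L-m)/2 : ℕ):ℤ) - 2*(M:ℤ) = (((L-m)/2 : ℕ):ℤ) by omega]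
  · rw [if_neg hpar, if_neg (by omega : ¬ 2 ∣ (L-m)), mul_zero]

lemma RHS_eq (hp6 : ∀ n : ℕ, qPoch (s^6) (s^6) n ≠ 0) (L M : ℕ) :
    (∑' j : ℤ, s ^ (3 * j ^ 2 + 2 * j) * qTriW L M j j ((s^2) ^ 3) (s ^ 3))
    = coeff L ((∏ j ∈ Finset.range M, (1 + C (s^3 * (s^6)^j) * X)) * Hs s M) := by
  have hT : ∀ j : ℤ, qTriW L M j j ((s^2)^3) (s^3)
      = ∑ n ∈ Finset.range (M+1), (if (2:ℤ) ∣ ((L:ℤ) - j - (n:ℤ)) then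
          (s^3) ^ (n^2) * qBinom (M:ℤ) (n:ℤ) ((s^2)^3) *
          qBinom ((M:ℤ)+j+((L:ℤ)-j-(n:ℤ))/2) ((M:ℤ)+j) ((s^2)^3) *
          qBinom ((M:ℤ)-j+((L:ℤ)+j-(n:ℤ))/2) ((M:ℤ)-j) ((s^2)^3) else 0) := by
    intro j
    rw [qTriW]
    apply tsum_eq_sum
    intro n hn
    have hn' : M + 1 ≤ n := by simpa [Nat.lt_succ_iff, Nat.succ_le_iff] using Finset.mem_range.not.mp hn
    by_cases hg : (2:ℤ) ∣ ((L:ℤ) - j - (n:ℤ))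
    · rw [if_pos hg, show qBinom (M:ℤ) (n:ℤ) (((s:ℂ)^2)^3) = 0 from
        qBinom_eq_zero (by omega), mul_zero, zero_mul, zero_mul]
    · exact if_neg hg
  simp only [hT]
  rw [tsum_eq_sum (s := Finset.Icc (-(M:ℤ)) (M:ℤ)) (fun j hj => by
    have hj' : (M:ℤ) < j ∨ j < -(M:ℤ) := by
      rcases (Finset.mem_Icc.not.mp hj) with h
      omega
    rw [show (∑ n ∈ Finset.range (M+1), (if (2:ℤ) ∣ ((L:ℤ) - j - (n:ℤ)) then
          (s^3) ^ (n^2) * qBinom (M:ℤ) (n:ℤ) ((s^2)^3) *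
          qBinom ((M:ℤ)+j+((L:ℤ)-j-(n:ℤ))/2) ((M:ℤ)+j) ((s^2)^3) *
          qBinom ((M:ℤ)-j+((L:ℤ)+j-(n:ℤ))/2) ((M:ℤ)-j) ((s^2)^3) else 0)) = 0 from
      Finset.sum_eq_zero (fun n hn => by
        by_cases hg : (2:ℤ) ∣ ((L:ℤ) - j - (n:ℤ))
        · rcases hj' with h | h
          · rw [if_pos hg, show qBinom ((M:ℤ)-j+((L:ℤ)+j-(n:ℤ))/2) ((M:ℤ)-j) (((s:ℂ)^2)^3) = 0 from
              qBinom_eq_zero (by omega), mul_zero]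
          · rw [if_pos hg, show qBinom ((M:ℤ)+j+((L:ℤ)-j-(n:ℤ))/2) ((M:ℤ)+j) (((s:ℂ)^2)^3) = 0 from
              qBinom_eq_zero (by omega), mul_zero, zero_mul]
        · exact if_neg hg), mul_zero])]
  rw [Finset.sum_congr rfl (fun j _ => Finset.mul_sum _ _ _), Finset.sum_comm]
  rw [coeff_mul, Finset.Nat.sum_antidiagonal_eq_sum_range_succ_mk]
  rw [show (∑ n ∈ Finset.range (M+1), ∑ j ∈ Finset.Icc (-(M:ℤ)) (M:ℤ),
        s ^ (3*j^2+2*j) * (if (2:ℤ) ∣ ((L:ℤ) - j - (n:ℤ)) then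
          (s^3) ^ (n^2) * qBinom (M:ℤ) (n:ℤ) ((s^2)^3) *
          qBinom ((M:ℤ)+j+((L:ℤ)-j-(n:ℤ))/2) ((M:ℤ)+j) ((s^2)^3) *
          qBinom ((M:ℤ)-j+((L:ℤ)+j-(n:ℤ))/2) ((M:ℤ)-j) ((s^2)^3) else 0))
      = ∑ n ∈ Finset.range (min L M + 1), ∑ j ∈ Finset.Icc (-(M:ℤ)) (M:ℤ),
        s ^ (3*j^2+2*j) * (if (2:ℤ) ∣ ((L:ℤ) - j - (n:ℤ)) then
          (s^3) ^ (n^2) * qBinom (M:ℤ) (n:ℤ) ((s^2)^3) *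
          qBinom ((M:ℤ)+j+((L:ℤ)-j-(n:ℤ))/2) ((M:ℤ)+j) ((s^2)^3) *
          qBinom ((M:ℤ)-j+((L:ℤ)+j-(n:ℤ))/2) ((M:ℤ)-j) ((s^2)^3) else 0) from by
    symm
    apply Finset.sum_subset (by intro a ha; simp only [Finset.mem_range] at *; omega)
    intro n hn1 hn2
    simp only [Finset.mem_range] at hn1 hn2
    have hnL : L < n := by omega
    apply Finset.sum_eq_zero
    intro j hj
    by_cases hg : (2:ℤ) ∣ ((L:ℤ) - j - (n:ℤ))
    · obtain ⟨d, hd⟩ := hg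
      rcases lt_or_ge d 0 with hd0 | hd0
      · rw [if_pos ⟨d, hd⟩, show ((L:ℤ)-j-(n:ℤ))/2 = d by omega,
          show qBinom ((M:ℤ)+j+d) ((M:ℤ)+j) (((s:ℂ)^2)^3) = 0 from qBinom_eq_zero (by omega),
          mul_zero, zero_mul, mul_zero]
      · rw [if_pos ⟨d, hd⟩, show ((L:ℤ)+j-(n:ℤ))/2 = (L:ℤ) - (n:ℤ) - d by omega,
          show qBinom ((M:ℤ)-j+((L:ℤ)-(n:ℤ)-d)) ((M:ℤ)-j) (((s:ℂ)^2)^3) = 0 from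
            qBinom_eq_zero (by omega), mul_zero, mul_zero]
    · rw [if_neg hg, mul_zero]]
  rw [show (∑ m ∈ Finset.range (L+1),
        (coeff m) (∏ j ∈ Finset.range M, (1 + C (s^3 * (s^6)^j) * X)) * (coeff (L-m)) (Hs s M))
      = ∑ m ∈ Finset.range (min L M + 1),
        (coeff m) (∏ j ∈ Finset.range M, (1 + C (s^3 * (s^6)^j) * X)) * (coeff (L-m)) (Hs s M) from by
    symm
    apply Finset.sum_subset (by intro a ha; simp only [Finset.mem_range] at *; omega)
    intro n hn1 hn2
    simp only [Finset.mem_range] at hn1 hn2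
    rw [coeff_prodA hp6 (s^3) M n,
      show qBinom ((M:ℕ):ℤ) ((n:ℕ):ℤ) ((s:ℂ)^6) = 0 from qBinom_eq_zero (by omega),
      mul_zero, zero_mul]]
  apply Finset.sum_congr rfl
  intro n hn
  have hn' : n ≤ L ∧ n ≤ M := by simp only [Finset.mem_range] at hn; omega
  rw [coeff_prodA hp6 (s^3) M n]
  simp only [Hs, coeff_mk]
  rw [Finset.sum_congr rfl (fun j _ => show
      s ^ (3*j^2+2*j) * (if (2:ℤ) ∣ ((L:ℤ) - j - (n:ℤ)) then
          (s^3) ^ (n^2) * qBinom (M:ℤ) (n:ℤ) ((s^2)^3) *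
          qBinom ((M:ℤ)+j+((L:ℤ)-j-(n:ℤ))/2) ((M:ℤ)+j) ((s^2)^3) *
          qBinom ((M:ℤ)-j+((L:ℤ)+j-(n:ℤ))/2) ((M:ℤ)-j) ((s^2)^3) else 0)
      = ((s^3) ^ (n^2) * qBinom (M:ℤ) (n:ℤ) ((s:ℂ)^6)) *
        (if (2:ℤ) ∣ (((L-n:ℕ):ℤ) - j) then
          wt s j * qBinom ((M:ℤ)+j+(((L-n:ℕ):ℤ)-j)/2) ((M:ℤ)+j) ((s:ℂ)^6)
            * qBinom ((M:ℤ)-j+(((L-n:ℕ):ℤ)+j)/2) ((M:ℤ)-j) ((s:ℂ)^6)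
        else 0) from by
    rw [show ((s:ℂ)^2)^3 = s^6 by ring]
    rw [show (L:ℤ) - j - (n:ℤ) = ((L-n:ℕ):ℤ) - j by omega,
        show (L:ℤ) + j - (n:ℤ) = ((L-n:ℕ):ℤ) + j by omega]
    by_cases hg : (2:ℤ) ∣ (((L-n:ℕ):ℤ) - j)
    · rw [if_pos hg, if_pos hg, wt]
      ring
    · rw [if_neg hg, if_neg hg, mul_zero, mul_zero]), ← Finset.mul_sum, jsum M (L-n)]
  rw [show ((s:ℂ)^3)^(n^2) = (s^3)^n * (s^6)^(n.choose 2) by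
    rw [← pow_mul s 3 (n^2), ← pow_mul s 3 n, ← pow_mul s 6 (n.choose 2), ← pow_add]
    congr 1
    have h := nat_sq n
    linarith]
end Asm


theorem doubly_bounded_warnaar (L M : ℕ) (q s : ℂ) (hs : s ^ 2 = q) (hq : q ≠ 0) (hroot : ∀ k : ℕ, 0 < k → q ^ k ≠ 1) :
    (∑' m : ℕ, if m % 2 = L % 2 then
        s ^ (m ^ 2) * qBinom (3 * (M : ℤ)) (m : ℤ) q *
          qBinom (2 * (M : ℤ) + ((L : ℤ) - m) / 2) (2 * (M : ℤ)) (q ^ 3)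
      else 0) =
    ∑' j : ℤ, s ^ (3 * j ^ 2 + 2 * j) * qTriW L M j j (q ^ 3) (s ^ 3) := by
  subst hs
  have hs0 : s ≠ 0 := fun h => hq (by rw [h]; ring)
  have hp2 : ∀ n : ℕ, qPoch (s^2) (s^2) n ≠ 0 := qPoch_ne _ hroot
  have hp6 : ∀ n : ℕ, qPoch (s^6) (s^6) n ≠ 0 := by
    apply qPoch_ne
    intro k hk
    rw [show (s:ℂ)^6 = (s^2)^3 by ring, ← pow_mul]
    exact hroot (3*k) (by omega)
  rw [LHS_eq hp2 L M, RHS_eq hp6 L M]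
  congr 1
  rw [regroup M, ← starProd hs0 hp6 M]
  linear_combination ((∏ j ∈ Finset.range M, ((1 : PowerSeries ℂ) + PowerSeries.C (s^3 * (s^6)^j) * PowerSeries.X)) * Hs s M) * Fser_prod hp6 (2*M)
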